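/- arXiv:2311.07265 — 2 statements merged into one kernel-verified Lean document; each statement's English description precedes it below -/
import Mathlib

section
/- Let C be an 𝔽₂-subspace of V and i, j ∈ V with i − j ∉ C^⊥ₛ. If f ∈ Q(i) and g ∈ Q(j), then f and g are orthogonal with respect to the standard inner product: Σ_{x ∈ 𝔽₂^n} conj(f(x))·g(x) = 0. -/
open Finset

/-- `V = 𝔽₂ⁿ × 𝔽₂ⁿ`, elements written `(a|b)`. -/
abbrev Vn (n : ℕ) : Type := (Fin n → ZMod 2) × (Fin n → ZMod 2)

/-- The symplectic inner product `((a|b),(a'|b'))ₛ = a·b' + a'·b`. -/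
def symp {n : ℕ} (v w : Vn n) : ZMod 2 :=
  (∑ i, v.1 i * w.2 i) + (∑ i, w.1 i * v.2 i)

lemma symp_add_left {n : ℕ} (a b s : Vn n) : symp (a + b) s = symp a s + symp b s := by
  simp only [symp, Prod.fst_add, Prod.snd_add, Pi.add_apply, add_mul, mul_add,
    Finset.sum_add_distrib]
  ring

lemma symp_smul_left {n : ℕ} (c : ZMod 2) (v s : Vn n) : symp (c • v) s = c * symp v s := by
  simp only [symp, Prod.smul_fst, Prod.smul_snd, Pi.smul_apply, smul_eq_mul, mul_add,
    Finset.mul_sum]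
  congr 1
  · exact Finset.sum_congr rfl fun i _ => by ring
  · exact Finset.sum_congr rfl fun i _ => by ring

/-- The symplectic orthogonal `S^⊥ₛ` of a subset `S ⊆ V`, as an `𝔽₂`-subspace of `V`. -/
def sympOrtho {n : ℕ} (S : Set (Vn n)) : Submodule (ZMod 2) (Vn n) where
  carrier := {v | ∀ s ∈ S, symp v s = 0}
  zero_mem' := by intro s hs; simp [symp]
  add_mem' := by
    intro a b ha hb s hs
    rw [Set.mem_setOf_eq] at *
    rw [symp_add_left, ha s hs, hb s hs, add_zero]
  smul_mem' := by
    intro c v hv s hs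
    rw [Set.mem_setOf_eq] at *
    rw [symp_smul_left, hv s hs, mul_zero]

/-- `ε : 𝔽₂ → ℂ`, `ε(0) = 1`, `ε(1) = -1`. -/
def eps (x : ZMod 2) : ℂ := if x = 0 then 1 else -1

/-- Quantum weight of `(a|b)`: number of positions `i` with `(aᵢ,bᵢ) ≠ (0,0)`. -/
def wQ {n : ℕ} (v : Vn n) : ℕ :=
  (Finset.univ.filter fun i => (v.1 i, v.2 i) ≠ ((0 : ZMod 2), (0 : ZMod 2))).card

/-- Quotient minimum norm `‖x̄‖ = min_{v ∈ x̄} w_Q(v)` on `V ⧸ H`. -/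
noncomputable def qnorm {n : ℕ} (H : Submodule (ZMod 2) (Vn n)) (x : Vn n ⧸ H) : ℕ :=
  sInf {m | ∃ v : Vn n, (Submodule.Quotient.mk v : Vn n ⧸ H) = x ∧ wQ v = m}

/-- Quotient distance `d(x̄,ȳ) = ‖x̄ - ȳ‖` on `V ⧸ H`. -/
noncomputable def qdist {n : ℕ} (H : Submodule (ZMod 2) (Vn n)) (x y : Vn n ⧸ H) : ℕ :=
  qnorm H (x - y)

/-- The operator `W(a,b)` acting on functions `𝔽₂ⁿ → ℂ`: `(W(a,b)f)(x) = ε(b·x)·f(x+a)`. -/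
def Wop {n : ℕ} (a b : Fin n → ZMod 2) (f : (Fin n → ZMod 2) → ℂ) : (Fin n → ZMod 2) → ℂ :=
  fun x => eps (∑ i, b i * x i) * f (x + a)

/-- The joint eigenspace `Q(i)` of the operators `W(c₁,c₂)`, `(c₁|c₂) ∈ C`. -/
def Qset {n : ℕ} (C : Submodule (ZMod 2) (Vn n)) (i : Vn n) : Set ((Fin n → ZMod 2) → ℂ) :=
  {f | ∀ c ∈ C, ∀ x, Wop c.1 c.2 f x = eps (symp i c) * f x}


lemma eps_mul_self (t : ZMod 2) : eps t * eps t = 1 := by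
  unfold eps; split <;> ring

lemma conj_eps (t : ZMod 2) : (starRingEnd ℂ) (eps t) = eps t := by
  unfold eps; split <;> simp

lemma eps_add (s t : ZMod 2) : eps (s + t) = eps s * eps t := by
  fin_cases s <;> fin_cases t <;> simp [eps] <;> split_ifs <;> simp_all <;> contradiction

lemma symp_sub_left {n : ℕ} (a b s : Vn n) : symp (a - b) s = symp a s + symp b s := by
  have h : a - b = a + b := by
    ext i <;> simp [Prod.ext_iff, sub_eq_add_neg, CharTwo.neg_eq]
  rw [h, symp_add_left]

/-- If `i - j ∉ C^⊥ₛ`, then any `f ∈ Q(i)` and `g ∈ Q(j)` are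
orthogonal for the standard inner product: `∑ₓ conj(f(x))·g(x) = 0`. -/
theorem Qset_orthogonal (n : ℕ) (hn : 0 < n) (C : Submodule (ZMod 2) (Vn n)) (i j : Vn n)
    (hij : i - j ∉ sympOrtho (C : Set (Vn n)))
    (f g : (Fin n → ZMod 2) → ℂ) (hf : f ∈ Qset C i) (hg : g ∈ Qset C j) :
    ∑ x : Fin n → ZMod 2, (starRingEnd ℂ) (f x) * g x = 0 := by
  -- extract a witness c ∈ C with symp (i-j) c ≠ 0
  have hex : ∃ c ∈ C, symp (i - j) c ≠ 0 := by
    by_contra h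
    push_neg at h
    exact hij (fun s hs => h s hs)
  obtain ⟨c, hcC, hc⟩ := hex
  have hsum : symp i c + symp j c = 1 := by
    rw [← symp_sub_left]
    have h01 : ∀ t : ZMod 2, t = 0 ∨ t = 1 := by decide
    rcases h01 (symp (i - j) c) with h | h
    · exact absurd h hc
    · exact h
  set a := c.1
  set b := c.2
  have hfa : ∀ x, f (x + a) = eps (∑ k, b k * x k) * (eps (symp i c) * f x) := by
    intro x
    have h := hf c hcC x
    unfold Wop at h
    calc f (x + a) = eps (∑ k, b k * x k) * (eps (∑ k, b k * x k) * f (x + a)) := by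
          rw [← mul_assoc, eps_mul_self, one_mul]
      _ = eps (∑ k, b k * x k) * (eps (symp i c) * f x) := by rw [h]
  have hga : ∀ x, g (x + a) = eps (∑ k, b k * x k) * (eps (symp j c) * g x) := by
    intro x
    have h := hg c hcC x
    unfold Wop at h
    calc g (x + a) = eps (∑ k, b k * x k) * (eps (∑ k, b k * x k) * g (x + a)) := by
          rw [← mul_assoc, eps_mul_self, one_mul]
      _ = eps (∑ k, b k * x k) * (eps (symp j c) * g x) := by rw [h]
  set S := ∑ x : Fin n → ZMod 2, (starRingEnd ℂ) (f x) * g x with hS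
  have hre : ∑ x : Fin n → ZMod 2, (starRingEnd ℂ) (f (x + a)) * g (x + a) = S :=
    Fintype.sum_equiv (Equiv.addRight a)
      (fun x => (starRingEnd ℂ) (f (x + a)) * g (x + a))
      (fun x => (starRingEnd ℂ) (f x) * g x) (fun x => rfl)
  have key : S = eps (symp i c) * eps (symp j c) * S := by
    calc S = ∑ x : Fin n → ZMod 2, (starRingEnd ℂ) (f (x + a)) * g (x + a) := hre.symm
      _ = ∑ x : Fin n → ZMod 2, eps (symp i c) * eps (symp j c) *
            ((starRingEnd ℂ) (f x) * g x) := by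
          refine Finset.sum_congr rfl fun x _ => ?_
          rw [hfa x, hga x, map_mul, map_mul, conj_eps, conj_eps]
          calc eps (∑ k, b k * x k) * (eps (symp i c) * (starRingEnd ℂ) (f x)) *
                (eps (∑ k, b k * x k) * (eps (symp j c) * g x))
              = (eps (∑ k, b k * x k) * eps (∑ k, b k * x k)) *
                  (eps (symp i c) * eps (symp j c) * ((starRingEnd ℂ) (f x) * g x)) := by ring
            _ = eps (symp i c) * eps (symp j c) * ((starRingEnd ℂ) (f x) * g x) := by
                rw [eps_mul_self, one_mul]
      _ = eps (symp i c) * eps (symp j c) * S := by rw [← Finset.mul_sum]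
  have heps : eps (symp i c) * eps (symp j c) = -1 := by
    rw [← eps_add, hsum]; simp [eps]
  rw [heps] at key
  have h2 : (2 : ℂ) * S = 0 := by linear_combination key
  exact (mul_eq_zero.mp h2).resolve_left two_ne_zero
end

section
/- (Gilbert–Varshamov-type measurement bound) Let C be an 𝔽₂-subspace of V with C ⊆ C^⊥ₛ and dim_{𝔽₂} C = n − k, let d ≥ 1, C(d−1) := {c ∈ C : w_Q(c) ≤ d−1}, s := dim_{𝔽₂} span(C(d−1)), D := C(d−1)^⊥ₛ, and let D̄ be the image of D in V/C^⊥ₛ. Let ME(d−1) := {ē ∈ D̄ : ‖ē‖ ≤ d−1}. If Ω ⊆ D̄ has pairwise quotient distances all ≥ d and 2^k · |Ω| · |ME(d−1)| < 2^{n−s}, then there exists ω̄ ∈ D̄ with ω̄ ∉ Ω such that d(ω̄, ī) ≥ d for every ī ∈ Ω; hence Ω ∪ {ω̄} still has pairwise quotient distances ≥ d. -/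
open Finset

lemma symp_comm {n : ℕ} (v w : Vn n) : symp v w = symp w v := by
  simp only [symp]; ring

noncomputable def sympB (n : ℕ) : LinearMap.BilinForm (ZMod 2) (Vn n) :=
  LinearMap.mk₂ (ZMod 2) symp symp_add_left symp_smul_left
    (fun a b c => by rw [symp_comm, symp_add_left, symp_comm a b, symp_comm a c])
    (fun c a b => by rw [symp_comm, symp_smul_left, symp_comm a b, smul_eq_mul])

@[simp] lemma sympB_apply {n : ℕ} (v w : Vn n) : sympB n v w = symp v w := rfl

lemma sympB_isRefl {n : ℕ} : (sympB n).IsRefl := fun x y h => by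
  simpa [symp_comm y x] using h

lemma sympB_nondegenerate {n : ℕ} : (sympB n).Nondegenerate := by
  have hL : LinearMap.SeparatingLeft (sympB n) := by
    intro m hm
    ext j
    · have := hm ((0 : Fin n → ZMod 2), Pi.single j 1)
      simpa [symp, Pi.single_apply, mul_ite, Finset.sum_ite_eq'] using this
    · have := hm (Pi.single j 1, (0 : Fin n → ZMod 2))
      simpa [symp, Pi.single_apply, ite_mul, Finset.sum_ite_eq'] using this
  exact ⟨hL, fun y hy => hL y fun x => by simpa [symp_comm] using hy x⟩

lemma sympOrtho_eq {n : ℕ} (S : Set (Vn n)) :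
    sympOrtho S = (sympB n).orthogonal (Submodule.span (ZMod 2) S) := by
  ext v
  constructor
  · intro hv w hw
    induction hw using Submodule.span_induction with
    | mem x hx => simpa [LinearMap.BilinForm.IsOrtho, symp_comm] using hv x hx
    | zero => simp [LinearMap.BilinForm.IsOrtho]
    | add x y _ _ hx hy =>
        simp only [LinearMap.BilinForm.IsOrtho, sympB_apply] at hx hy ⊢
        rw [symp_add_left, hx, hy, add_zero]
    | smul c x _ hx =>
        simp only [LinearMap.BilinForm.IsOrtho, sympB_apply] at hx ⊢
        rw [symp_smul_left, hx, mul_zero]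
  · intro hv s hs
    have := hv s (Submodule.subset_span hs)
    simpa [LinearMap.BilinForm.IsOrtho, symp_comm] using this

lemma finrank_sympOrtho {n : ℕ} (S : Set (Vn n)) :
    Module.finrank (ZMod 2) (sympOrtho S) =
      2 * n - Module.finrank (ZMod 2) (Submodule.span (ZMod 2) S) := by
  rw [sympOrtho_eq, LinearMap.BilinForm.finrank_orthogonal sympB_nondegenerate]
  congr 1
  simp [Module.finrank_prod]
  ring

lemma wQ_zero {n : ℕ} : wQ (0 : Vn n) = 0 := by
  simp [wQ]

lemma qnorm_zero {n : ℕ} (H : Submodule (ZMod 2) (Vn n)) : qnorm H 0 = 0 := by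
  apply Nat.sInf_eq_zero.mpr
  exact Or.inl ⟨0, by simp, wQ_zero⟩

lemma neg_eq_self' {M : Type*} [AddCommGroup M] [Module (ZMod 2) M] (x : M) : -x = x := by
  have : x + x = 0 := by
    have := two_smul (ZMod 2) x
    rw [show (2 : ZMod 2) = 0 by decide, zero_smul] at this
    exact this.symm
  exact neg_eq_of_add_eq_zero_left this

lemma qdist_comm {n : ℕ} (H : Submodule (ZMod 2) (Vn n)) (x y : Vn n ⧸ H) :
    qdist H x y = qdist H y x := by
  unfold qdist
  rw [show x - y = y - x from by rw [← neg_sub y x, neg_eq_self']]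

lemma exists_far_coset {n d : ℕ} (hd : 1 ≤ d) (H : Submodule (ZMod 2) (Vn n))
    (Dm : Submodule (ZMod 2) (Vn n ⧸ H)) (Dbar : Set (Vn n ⧸ H))
    (hmem : ∀ x, x ∈ Dbar ↔ x ∈ Dm)
    (Ω : Set (Vn n ⧸ H)) (hΩD : Ω ⊆ Dbar)
    (hlt2 : Nat.card Ω * Nat.card {e : Vn n ⧸ H | e ∈ Dbar ∧ qnorm H e ≤ d - 1}
      < Nat.card Dm) :
    ∃ ω, ω ∈ Dbar ∧ ω ∉ Ω ∧ (∀ i ∈ Ω, d ≤ qdist H ω i) := by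
  classical
  haveI : Finite (Vn n ⧸ H) := Quotient.finite _
  set ME := {e : Vn n ⧸ H | e ∈ Dbar ∧ qnorm H e ≤ d - 1} with hMEdef
  set Bad := {x : Vn n ⧸ H | x ∈ Dbar ∧ ∃ i ∈ Ω, qdist H x i ≤ d - 1} with hBaddef
  have hf : ∃ f : ↥Ω × ↥ME → ↥Bad, Function.Surjective f := by
    refine ⟨fun p => ⟨p.1.1 + p.2.1, ?_, p.1.1, p.1.2, ?_⟩, ?_⟩
    · rw [hmem]
      exact Dm.add_mem ((hmem _).mp (hΩD p.1.2)) ((hmem _).mp p.2.2.1)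
    · show qdist H (p.1.1 + p.2.1) p.1.1 ≤ d - 1
      rw [qdist, add_sub_cancel_left]
      exact p.2.2.2
    · rintro ⟨x, hxD, i, hi, hle⟩
      refine ⟨(⟨i, hi⟩, ⟨x - i, ?_, hle⟩), ?_⟩
      · rw [hmem]
        exact Dm.sub_mem ((hmem _).mp hxD) ((hmem _).mp (hΩD hi))
      · ext
        show i + (x - i) = x
        rw [add_comm, sub_add_cancel]
  have hBadcard : Nat.card Bad ≤ Nat.card Ω * Nat.card ME := by
    obtain ⟨f, hfsurj⟩ := hf
    calc Nat.card Bad ≤ Nat.card (↥Ω × ↥ME) := Nat.card_le_card_of_surjective f hfsurj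
    _ = Nat.card Ω * Nat.card ME := Nat.card_prod _ _
  have hcardDbar : Nat.card Dbar = Nat.card Dm := by
    have : Dbar = (Dm : Set (Vn n ⧸ H)) := Set.ext hmem
    rw [this]
    rfl
  have hnotsub : ¬ Dbar ⊆ Bad := by
    intro hsub
    have hle' : Nat.card Dbar ≤ Nat.card Bad := by
      rw [Nat.card_coe_set_eq, Nat.card_coe_set_eq]
      exact Set.ncard_le_ncard hsub (Set.toFinite Bad)
    omega
  obtain ⟨ω, hωD, hωB⟩ := Set.not_subset.mp hnotsub
  have hωΩ : ω ∉ Ω := fun h => hωB ⟨hωD, ω, h, by simp [qdist, sub_self, qnorm_zero]⟩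
  refine ⟨ω, hωD, hωΩ, ?_⟩
  intro i hi
  by_contra h
  push_neg at h
  exact hωB ⟨hωD, i, hi, by omega⟩


set_option synthInstance.maxHeartbeats 800000 in
set_option maxHeartbeats 1000000 in
/-- **Gilbert–Varshamov-type measurement bound.** With the notation of the
Hamming-type bound, if `Ω ⊆ D̄` has pairwise quotient distances `≥ d` and
`2^k · |Ω| · |ME(d-1)| < 2^(n-s)`, then there is a new coset `ω̄ ∈ D̄ \ Ω` at quotient
distance `≥ d` from every codeword of `Ω`, so `Ω ∪ {ω̄}` still has pairwise distances `≥ d`. -/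
theorem gv_measurement_bound (n k d : ℕ) (hn : 0 < n) (hk : k ≤ n) (hd : 1 ≤ d)
    (C : Submodule (ZMod 2) (Vn n)) (hself : C ≤ sympOrtho (C : Set (Vn n)))
    (hC : Module.finrank (ZMod 2) C = n - k) (s : ℕ)
    (hs : s = Module.finrank (ZMod 2)
      (Submodule.span (ZMod 2) {c : Vn n | c ∈ C ∧ wQ c ≤ d - 1}))
    (Dbar : Set (Vn n ⧸ sympOrtho (C : Set (Vn n))))
    (hDbar : Dbar = (fun v => (Submodule.Quotient.mk v : Vn n ⧸ sympOrtho (C : Set (Vn n)))) ''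
      (sympOrtho {c : Vn n | c ∈ C ∧ wQ c ≤ d - 1} : Set (Vn n)))
    (Ω : Set (Vn n ⧸ sympOrtho (C : Set (Vn n)))) (hΩD : Ω ⊆ Dbar)
    (hdist : ∀ x ∈ Ω, ∀ y ∈ Ω, x ≠ y → d ≤ qdist (sympOrtho (C : Set (Vn n))) x y)
    (hlt : 2 ^ k * Nat.card Ω *
        Nat.card {e : Vn n ⧸ sympOrtho (C : Set (Vn n)) | e ∈ Dbar ∧
          qnorm (sympOrtho (C : Set (Vn n))) e ≤ d - 1}
      < 2 ^ (n - s)) :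
    ∃ ω : Vn n ⧸ sympOrtho (C : Set (Vn n)), ω ∈ Dbar ∧ ω ∉ Ω ∧
      (∀ i ∈ Ω, d ≤ qdist (sympOrtho (C : Set (Vn n))) ω i) ∧
      (∀ x ∈ Ω ∪ {ω}, ∀ y ∈ Ω ∪ {ω}, x ≠ y →
        d ≤ qdist (sympOrtho (C : Set (Vn n))) x y) := by
  classical
  haveI : Finite (Vn n ⧸ sympOrtho (C : Set (Vn n))) := Quotient.finite _
  have hmem : ∀ x, x ∈ Dbar ↔
      x ∈ Submodule.map (sympOrtho (C : Set (Vn n))).mkQ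
        (sympOrtho {c : Vn n | c ∈ C ∧ wQ c ≤ d - 1}) := by
    intro x
    rw [hDbar]
    simp [Submodule.mem_map, Set.mem_image]
  -- dimensions
  have hHD : sympOrtho (C : Set (Vn n)) ≤ sympOrtho {c : Vn n | c ∈ C ∧ wQ c ≤ d - 1} :=
    fun v hv c hc => hv c hc.1
  have hfH : Module.finrank (ZMod 2) (sympOrtho (C : Set (Vn n))) = 2 * n - (n - k) := by
    rw [finrank_sympOrtho, Submodule.span_eq C, hC]
  have hfD : Module.finrank (ZMod 2) (sympOrtho {c : Vn n | c ∈ C ∧ wQ c ≤ d - 1})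
      = 2 * n - s := by
    rw [finrank_sympOrtho, ← hs]
  have hsle : s ≤ n - k := by
    rw [hs, ← hC]
    exact Submodule.finrank_mono (Submodule.span_le.mpr fun c hc => hc.1)
  have hker : Module.finrank (ZMod 2)
      (LinearMap.ker ((sympOrtho (C : Set (Vn n))).mkQ ∘ₗ
        (sympOrtho {c : Vn n | c ∈ C ∧ wQ c ≤ d - 1}).subtype))
      = Module.finrank (ZMod 2) (sympOrtho (C : Set (Vn n))) := by
    rw [LinearMap.ker_comp, Submodule.ker_mkQ]
    exact (Submodule.comapSubtypeEquivOfLe hHD).finrank_eq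
  have hrange : LinearMap.range ((sympOrtho (C : Set (Vn n))).mkQ ∘ₗ
      (sympOrtho {c : Vn n | c ∈ C ∧ wQ c ≤ d - 1}).subtype)
      = Submodule.map (sympOrtho (C : Set (Vn n))).mkQ
        (sympOrtho {c : Vn n | c ∈ C ∧ wQ c ≤ d - 1}) := by
    rw [LinearMap.range_comp, Submodule.range_subtype]
  have hsum := LinearMap.finrank_range_add_finrank_ker ((sympOrtho (C : Set (Vn n))).mkQ ∘ₗ
      (sympOrtho {c : Vn n | c ∈ C ∧ wQ c ≤ d - 1}).subtype)
  rw [hrange, hker] at hsum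
  have hcardDm : Nat.card (Submodule.map (sympOrtho (C : Set (Vn n))).mkQ
      (sympOrtho {c : Vn n | c ∈ C ∧ wQ c ≤ d - 1}))
      = 2 ^ (Module.finrank (ZMod 2) (Submodule.map (sympOrtho (C : Set (Vn n))).mkQ
        (sympOrtho {c : Vn n | c ∈ C ∧ wQ c ≤ d - 1}))) := by
    haveI : Fintype (Submodule.map (sympOrtho (C : Set (Vn n))).mkQ
      (sympOrtho {c : Vn n | c ∈ C ∧ wQ c ≤ d - 1})) := Fintype.ofFinite _
    rw [Nat.card_eq_fintype_card, Module.card_eq_pow_finrank (K := ZMod 2), ZMod.card]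
  have hlt2 : Nat.card Ω * Nat.card {e : Vn n ⧸ sympOrtho (C : Set (Vn n)) | e ∈ Dbar ∧
      qnorm (sympOrtho (C : Set (Vn n))) e ≤ d - 1}
      < Nat.card (Submodule.map (sympOrtho (C : Set (Vn n))).mkQ
        (sympOrtho {c : Vn n | c ∈ C ∧ wQ c ≤ d - 1})) := by
    rw [hcardDm]
    have h1 : (2 : ℕ) ^ (n - s) = 2 ^ k * 2 ^ (Module.finrank (ZMod 2)
        (Submodule.map (sympOrtho (C : Set (Vn n))).mkQ
          (sympOrtho {c : Vn n | c ∈ C ∧ wQ c ≤ d - 1}))) := by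
      rw [← pow_add]
      congr 1
      omega
    rw [h1, mul_assoc] at hlt
    exact Nat.lt_of_mul_lt_mul_left hlt
  obtain ⟨ω, hωD, hωΩ, hfar⟩ := exists_far_coset hd (sympOrtho (C : Set (Vn n))) _ Dbar hmem Ω hΩD hlt2
  refine ⟨ω, hωD, hωΩ, hfar, ?_⟩
  intro x hx y hy hxy
  rcases hx with hx | hx
  · rcases hy with hy | hy
    · exact hdist x hx y hy hxy
    · rw [Set.mem_singleton_iff] at hy; subst hy
      rw [qdist_comm]
      exact hfar x hx
  · rw [Set.mem_singleton_iff] at hx; subst hx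
    rcases hy with hy | hy
    · exact hfar y hy
    · rw [Set.mem_singleton_iff] at hy
      exact absurd hy.symm hxy
end
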